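/- Let $T$ be a directed tree rooted at $r$ with edges oriented away from the root, $S$ a set of vertices of $T$, and let $\hat{f} : E(T) \to \mathbb{R}_{\ge 0}$ and $g : E(T) \to \mathbb{R}_{\ge 0}$ be edge functions such that for every cut $U \subseteq V(T)$ with $r \in U$ and $S \cap U = \emptyset$ one has $\sum_{\hat{e} \in \delta^{out}(U)} \hat{f}(\hat{e}) \ge 2$, and suppose that for all $\hat{e}$: $\hat{f}(\hat{e}) - g(\hat{e}) \le x(\hat{e}) - y(\hat{e})$ where $x, y, g$ satisfy $\sum_{\hat{e} \in E(T)} g(\hat{e}) \le 1$ and $\sum_{\hat{e} \in E(T)} y(\hat{e}) \le \beta$, and call an edge $\hat{e}$ 'bad' if $x(\hat{e}) - y(\hat{e}) < \frac{1}{2\beta} y(\hat{e})$. Then for every cut $U$ separating $r$ from $S$: $\sum_{\hat{e} \in \delta^{out}(U), \hat{e} \text{ good}} (x(\hat{e}) - y(\hat{e})) \ge \frac{1}{2}$. -/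

import Mathlib

open Classical in
/-- Abstract form of the flow-on-good-paths lemma: if every cut `U` separating the root
`r` from `S` carries `f`-flow at least `2`, `f - g ≤ x - y` edgewise,
`∑ g ≤ 1` and `∑ y ≤ β`, then after discarding the `bad` edges (those with
`x e - y e < y e / (2β)`) every such cut still has residual capacity
`∑ (x e - y e)` at least `1/2`. -/
theorem stmt_11 {V : Type*} [Fintype V] [DecidableEq V]
    (ET : Finset (V × V)) (r : V) (S : Set V)
    (f g x y : V × V → ℝ) (β : ℝ) (hβ : 0 < β)
    (hf0 : ∀ e, 0 ≤ f e) (hg0 : ∀ e, 0 ≤ g e)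
    (hx0 : ∀ e, 0 ≤ x e) (hy0 : ∀ e, 0 ≤ y e)
    (hflow : ∀ U : Finset V, r ∈ U → (∀ s ∈ S, s ∉ U) →
      2 ≤ ∑ e ∈ ET.filter (fun e => e.1 ∈ U ∧ e.2 ∉ U), f e)
    (hfg : ∀ e ∈ ET, f e - g e ≤ x e - y e)
    (hgsum : ∑ e ∈ ET, g e ≤ 1)
    (hysum : ∑ e ∈ ET, y e ≤ β) :
    ∀ U : Finset V, r ∈ U → (∀ s ∈ S, s ∉ U) →
      1 / 2 ≤
        ∑ e ∈ ET.filter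
            (fun e => e.1 ∈ U ∧ e.2 ∉ U ∧ ¬(x e - y e < (1 / (2 * β)) * y e)),
          (x e - y e) := by

  intro U hrU hSU
  classical
  set C := ET.filter (fun e => e.1 ∈ U ∧ e.2 ∉ U) with hC
  set G := ET.filter (fun e => e.1 ∈ U ∧ e.2 ∉ U ∧ ¬(x e - y e < (1 / (2 * β)) * y e)) with hG
  set B := C.filter (fun e => x e - y e < (1 / (2 * β)) * y e) with hB
  have hGsub : G = C.filter (fun e => ¬(x e - y e < (1 / (2 * β)) * y e)) := by
    ext e; simp [hG, hC, Finset.mem_filter, and_assoc]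
  -- sum over C of (x - y) ≥ 1
  have h1 : (1 : ℝ) ≤ ∑ e ∈ C, (x e - y e) := by
    have hfgC : ∑ e ∈ C, (f e - g e) ≤ ∑ e ∈ C, (x e - y e) :=
      Finset.sum_le_sum (fun e he => hfg e (Finset.mem_filter.mp he).1)
    have hgC : ∑ e ∈ C, g e ≤ 1 :=
      le_trans (Finset.sum_le_sum_of_subset_of_nonneg (Finset.filter_subset _ _)
        (fun e _ _ => hg0 e)) hgsum
    have hfc : 2 ≤ ∑ e ∈ C, f e := hflow U hrU hSU
    have : ∑ e ∈ C, (f e - g e) = ∑ e ∈ C, f e - ∑ e ∈ C, g e := Finset.sum_sub_distrib f g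
    linarith
  -- bad sum ≤ 1/2
  have hbad : ∑ e ∈ B, (x e - y e) ≤ 1 / 2 := by
    have h2 : ∑ e ∈ B, (x e - y e) ≤ ∑ e ∈ B, (1 / (2 * β)) * y e :=
      Finset.sum_le_sum (fun e he => le_of_lt (Finset.mem_filter.mp he).2)
    have h3 : ∑ e ∈ B, (1 / (2 * β)) * y e = (1 / (2 * β)) * ∑ e ∈ B, y e := by
      rw [Finset.mul_sum]
    have h4 : ∑ e ∈ B, y e ≤ β := by
      refine le_trans ?_ hysum
      refine Finset.sum_le_sum_of_subset_of_nonneg ?_ (fun e _ _ => hy0 e)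
      exact (Finset.filter_subset _ _).trans (Finset.filter_subset _ _)
    have h5 : (1 / (2 * β)) * ∑ e ∈ B, y e ≤ (1 / (2 * β)) * β := by
      exact mul_le_mul_of_nonneg_left h4 (by positivity)
    have h6 : (1 / (2 * β)) * β = 1 / 2 := by field_simp
    linarith
  have hsplit : ∑ e ∈ C, (x e - y e) = ∑ e ∈ G, (x e - y e) + ∑ e ∈ B, (x e - y e) := by
    rw [hGsub, hB]
    rw [← Finset.sum_filter_add_sum_filter_not C (fun e => x e - y e < (1 / (2 * β)) * y e)]
    ring
  linarith
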